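/- Let X be a Banach space, I a discrete interval unbounded above, U ⊆ X closed, ρ > 0, and let F_t = L_t + N_t : U → U be semilinear with ‖Φ(t,s)‖ ≤ K·∏_{r=s}^{t-1} α_r for all s ≤ t (K ≥ 1, α_t ≥ 0) and ‖N_t(u)‖ ≤ b_t + a_t‖u‖ for all t and u ∈ U (a_t, b_t ≥ 0). If for every τ ∈ I one has lim_{s→∞} ∏_{r=τ}^{τ+s−1}(α_r + K a_r) = 0 and R_τ := K·lim_{t→∞} ∑_{s=τ}^{t−1} b_s·∏_{r=s+1}^{t−1}(α_r + K a_r) < ∞, and moreover sup_{τ∈I} R_τ < ∞, then (Δ) is forward dissipative with forward absorbing set 𝓐 := {(t,u) ∈ I×U : ‖u‖ ≤ ρ + sup_{τ∈I} R_τ}: for every τ ∈ I and every bounded nonautonomous set 𝓑 ⊆ I×U there exists S ∈ ℕ such that φ(τ+s;τ,𝓑(τ)) ⊆ 𝓐(τ+s) for all s ≥ S. -/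

import Mathlib

open Filter Topology Metric Bornology

/-- Iterates of a nonautonomous difference equation: `sol F τ u n = φ(τ+n; τ, u)`. -/
def sol {X : Type*} (F : ℤ → X → X) (τ : ℤ) (u : X) : ℕ → X
  | 0 => u
  | n + 1 => F (τ + (n : ℤ)) (sol F τ u n)

/-- General solution `φ(t; τ, u)` of the difference equation `u_{t+1} = F_t(u_t)`. -/
def phi {X : Type*} (F : ℤ → X → X) (t τ : ℤ) (u : X) : X :=
  sol F τ u (t - τ).toNat

/-- Transition operator: `transOp L s n = Φ(s+n, s) = L_{s+n-1} ⋯ L_s`. -/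
def transOp {X : Type*} [NormedAddCommGroup X] [NormedSpace ℝ X]
    (L : ℤ → X →L[ℝ] X) (s : ℤ) : ℕ → (X →L[ℝ] X)
  | 0 => ContinuousLinearMap.id ℝ X
  | n + 1 => (L (s + (n : ℤ))).comp (transOp L s n)

lemma prodIcoIntShift {M : Type*} [CommMonoid M] (f : ℤ → M) (τ : ℤ) (m n : ℕ) :
    ∏ s ∈ Finset.Ico (τ + (m : ℤ)) (τ + (n : ℤ)), f s
      = ∏ j ∈ Finset.Ico m n, f (τ + (j : ℤ)) := by
  refine Finset.prod_nbij' (fun s => (s - τ).toNat) (fun j => τ + (j : ℤ)) ?_ ?_ ?_ ?_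
    (fun x hx => ?_)
  · intro x hx; simp only [Finset.mem_Ico] at hx ⊢; omega
  · intro x hx; simp only [Finset.mem_Ico] at hx ⊢; omega
  · intro x hx; simp only [Finset.mem_Ico] at hx ⊢; omega
  · intro x hx; simp only [Finset.mem_Ico] at hx ⊢; omega
  · simp only [Finset.mem_Ico] at hx; congr 1; omega

lemma sumIcoIntShift {M : Type*} [AddCommMonoid M] (f : ℤ → M) (τ : ℤ) (m n : ℕ) :
    ∑ s ∈ Finset.Ico (τ + (m : ℤ)) (τ + (n : ℤ)), f s
      = ∑ j ∈ Finset.Ico m n, f (τ + (j : ℤ)) := by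
  refine Finset.sum_nbij' (fun s => (s - τ).toNat) (fun j => τ + (j : ℤ)) ?_ ?_ ?_ ?_
    (fun x hx => ?_)
  · intro x hx; simp only [Finset.mem_Ico] at hx ⊢; omega
  · intro x hx; simp only [Finset.mem_Ico] at hx ⊢; omega
  · intro x hx; simp only [Finset.mem_Ico] at hx ⊢; omega
  · intro x hx; simp only [Finset.mem_Ico] at hx ⊢; omega
  · simp only [Finset.mem_Ico] at hx; congr 1; omega

/-- Recursive majorant sequence. -/
def gseq (K C : ℝ) (cc bb : ℕ → ℝ) : ℕ → ℝ
  | 0 => K * C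
  | n + 1 => cc n * gseq K C cc bb n + K * bb n

lemma sum_shift_top (cc bb : ℕ → ℝ) (n : ℕ) :
    ∑ j ∈ Finset.range (n+1), bb j * ∏ r ∈ Finset.Ico (j+1) (n+1), cc r
      = (∑ j ∈ Finset.range n, bb j * ∏ r ∈ Finset.Ico (j+1) n, cc r) * cc n + bb n := by
  rw [Finset.sum_range_succ, Finset.Ico_self, Finset.prod_empty, mul_one, Finset.sum_mul]
  congr 1
  refine Finset.sum_congr rfl fun j hj => ?_
  have hj' := Finset.mem_range.1 hj
  rw [Finset.prod_Ico_succ_top (by omega), mul_assoc]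

lemma gseq_closed (K C : ℝ) (cc bb : ℕ → ℝ) (n : ℕ) :
    gseq K C cc bb n = K * C * ∏ r ∈ Finset.range n, cc r
      + K * ∑ j ∈ Finset.range n, bb j * ∏ r ∈ Finset.Ico (j+1) n, cc r := by
  induction n with
  | zero => simp [gseq]
  | succ n ih =>
    rw [show gseq K C cc bb (n+1) = cc n * gseq K C cc bb n + K * bb n from rfl, ih,
      Finset.prod_range_succ, sum_shift_top]
    ring

lemma gronwall (K C : ℝ) (hK : 1 ≤ K) (aa bb αα v : ℕ → ℝ)
    (haa : ∀ n, 0 ≤ aa n) (hαα : ∀ n, 0 ≤ αα n)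
    (hv : ∀ n, v n ≤ K * C * ∏ r ∈ Finset.range n, αα r
      + K * ∑ j ∈ Finset.range n, (bb j + aa j * v j) * ∏ r ∈ Finset.Ico (j+1) n, αα r) :
    ∀ n, v n ≤ gseq K C (fun r => αα r + K * aa r) bb n := by
  have hK0 : (0:ℝ) ≤ K := zero_le_one.trans hK
  set g := gseq K C (fun r => αα r + K * aa r) bb with hg
  have hWg : ∀ n, K * C * ∏ r ∈ Finset.range n, αα r
      + K * ∑ j ∈ Finset.range n, (bb j + aa j * g j) * ∏ r ∈ Finset.Ico (j+1) n, αα r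
      ≤ g n := by
    intro n
    induction n with
    | zero => simp [hg, gseq]
    | succ n ih =>
      have h1 : K * C * ∏ r ∈ Finset.range (n+1), αα r
          + K * ∑ j ∈ Finset.range (n+1), (bb j + aa j * g j) * ∏ r ∈ Finset.Ico (j+1) (n+1), αα r
          = αα n * (K * C * ∏ r ∈ Finset.range n, αα r
              + K * ∑ j ∈ Finset.range n, (bb j + aa j * g j) * ∏ r ∈ Finset.Ico (j+1) n, αα r)
            + K * (bb n + aa n * g n) := by
        rw [Finset.prod_range_succ, sum_shift_top]; ring
      have h3 : g (n+1) = (αα n + K * aa n) * g n + K * bb n := rfl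
      have h2 := mul_le_mul_of_nonneg_left ih (hαα n)
      rw [h1, h3]
      nlinarith [h2]
  intro n
  induction n using Nat.strong_induction_on with
  | _ n ih =>
    refine (hv n).trans (le_trans ?_ (hWg n))
    gcongr with j hj
    · exact Finset.prod_nonneg fun r _ => hαα r
    · exact haa j
    · exact ih j (Finset.mem_range.1 hj)


/-- forward absorbing sets of semilinear difference equations
(Proposition 4 of the paper). -/
theorem forward_absorbing_set
    {X : Type*} [NormedAddCommGroup X] [NormedSpace ℝ X] [CompleteSpace X]
    -- discrete interval I, unbounded above
    (I : Set ℤ) (hI : ∀ ⦃a b c : ℤ⦄, a ∈ I → c ∈ I → a ≤ b → b ≤ c → b ∈ I)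
    (hIub : ∀ t : ℤ, ∃ s ∈ I, t ≤ s)
    (ρ : ℝ) (hρ : 0 < ρ)
    -- closed state space U and semilinear right-hand sides F_t = L_t + N_t : U → U
    (U : Set X) (hUcl : IsClosed U)
    (L : ℤ → X →L[ℝ] X) (N : ℤ → X → X)
    (hNcont : ∀ t ∈ I, ContinuousOn (N t) U)
    (F : ℤ → X → X)
    (hF : ∀ t ∈ I, ∀ u ∈ U, F t u = L t u + N t u)
    (hFmap : ∀ t ∈ I, ∀ u ∈ U, F t u ∈ U)
    (K : ℝ) (hK : 1 ≤ K) (α : ℤ → ℝ) (hα : ∀ t, 0 ≤ α t)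
    (hΦ : ∀ s t : ℤ, s ∈ I → t ∈ I → s ≤ t →
      ‖transOp L s (t - s).toNat‖ ≤ K * ∏ r ∈ Finset.Ico s t, α r)
    (a b : ℤ → ℝ) (ha : ∀ t, 0 ≤ a t) (hb : ∀ t, 0 ≤ b t)
    (hN : ∀ t ∈ I, ∀ u ∈ U, ‖N t u‖ ≤ b t + a t * ‖u‖)
    -- forward limit relations
    (hlim : ∀ τ ∈ I,
      Tendsto (fun s : ℕ => ∏ r ∈ Finset.Ico τ (τ + (s : ℤ)), (α r + K * a r)) atTop (𝓝 0))
    (R : ℤ → ℝ)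
    (hR : ∀ τ ∈ I,
      Tendsto (fun n : ℕ =>
          K * ∑ s ∈ Finset.Ico τ (τ + (n : ℤ)),
            b s * ∏ r ∈ Finset.Ico (s + 1) (τ + (n : ℤ)), (α r + K * a r))
        atTop (𝓝 (R τ)))
    -- the R_τ are uniformly bounded, with least upper bound Rsup
    (Rsup : ℝ) (hRsup : IsLUB {x : ℝ | ∃ τ ∈ I, x = R τ} Rsup) :
    -- (Δ) is forward dissipative with absorbing set 𝓐 = {(t,u) : ‖u‖ ≤ ρ + Rsup}
    ∀ τ ∈ I, ∀ B : ℤ → Set X, (∀ t ∈ I, B t ⊆ U) →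
      (∃ C : ℝ, ∀ t ∈ I, ∀ u ∈ B t, ‖u‖ ≤ C) →
      ∃ S : ℕ, ∀ s : ℕ, S ≤ s → ∀ u ∈ B τ,
        phi F (τ + (s : ℤ)) τ u ∈ U ∧ ‖phi F (τ + (s : ℤ)) τ u‖ ≤ ρ + Rsup := by
  
  intro τ hτ B hBU hBbd
  obtain ⟨C0, hC0⟩ := hBbd
  set C := max C0 0 with hCdef
  have hCnn : (0:ℝ) ≤ C := le_max_right _ _
  have hK0 : (0:ℝ) ≤ K := zero_le_one.trans hK
  have hmem : ∀ m : ℤ, τ ≤ m → m ∈ I := fun m hm => by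
    obtain ⟨s, hs, hts⟩ := hIub m
    exact hI hτ hs hm hts
  -- the majorant sequence and its limit
  have hgeq : ∀ n : ℕ, gseq K C (fun r => α (τ+(r:ℤ)) + K * a (τ+(r:ℤ))) (fun j => b (τ+(j:ℤ))) n
      = K * C * ∏ r ∈ Finset.Ico τ (τ+(n:ℤ)), (α r + K * a r)
        + K * ∑ s ∈ Finset.Ico τ (τ+(n:ℤ)), b s * ∏ r ∈ Finset.Ico (s+1) (τ+(n:ℤ)), (α r + K * a r) := by
    intro n
    rw [gseq_closed]
    congr 1
    · congr 1
      have h := prodIcoIntShift (fun r => α r + K * a r) τ 0 n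
      simp only [Nat.cast_zero, add_zero] at h
      rw [Finset.range_eq_Ico, ← h]
    · congr 1
      have h := sumIcoIntShift (fun s => b s * ∏ r ∈ Finset.Ico (s+1) (τ+(n:ℤ)), (α r + K * a r)) τ 0 n
      simp only [Nat.cast_zero, add_zero] at h
      rw [Finset.range_eq_Ico, h]
      refine Finset.sum_congr rfl fun j hj => ?_
      congr 1
      rw [← prodIcoIntShift (fun r => α r + K * a r) τ (j+1) n]
      have h3 : τ + ((j+1:ℕ):ℤ) = τ + (j:ℤ) + 1 := by push_cast; ring
      rw [h3]
  -- limit of the majorant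
  have hRle : R τ ≤ Rsup := hRsup.1 ⟨τ, hτ, rfl⟩
  have hgt : Tendsto (fun n => gseq K C (fun r => α (τ+(r:ℤ)) + K * a (τ+(r:ℤ)))
      (fun j => b (τ+(j:ℤ))) n) atTop (𝓝 (R τ)) := by
    have h := (Tendsto.const_mul (K*C) (hlim τ hτ)).add (hR τ hτ)
    rw [mul_zero, zero_add] at h
    exact Tendsto.congr (fun n => (hgeq n).symm) h
  have hev : ∀ᶠ n in atTop, gseq K C (fun r => α (τ+(r:ℤ)) + K * a (τ+(r:ℤ)))
      (fun j => b (τ+(j:ℤ))) n < R τ + ρ :=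
    hgt.eventually_lt_const (by linarith)
  obtain ⟨S, hS⟩ := eventually_atTop.1 hev
  refine ⟨S, fun s hs u hu => ?_⟩
  have huU : u ∈ U := hBU τ hτ hu
  have huC : ‖u‖ ≤ C := (hC0 τ hτ u hu).trans (le_max_left _ _)
  have hsolU : ∀ n, sol F τ u n ∈ U := by
    intro n
    induction n with
    | zero => exact huU
    | succ n ih =>
      show F (τ + (n:ℤ)) (sol F τ u n) ∈ U
      exact hFmap _ (hmem _ (by omega)) _ ih
  -- variation of constants identity
  have hvoc : ∀ n : ℕ, sol F τ u n = transOp L τ n u +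
      ∑ j ∈ Finset.range n, transOp L (τ + (j:ℤ) + 1) (n - 1 - j) (N (τ + (j:ℤ)) (sol F τ u j)) := by
    intro n
    induction n with
    | zero => simp [sol, transOp]
    | succ n ih =>
      have h1 : sol F τ u (n+1) = L (τ+(n:ℤ)) (sol F τ u n) + N (τ+(n:ℤ)) (sol F τ u n) := by
        show F (τ+(n:ℤ)) (sol F τ u n) = _
        exact hF _ (hmem _ (by omega)) _ (hsolU n)
      have hlast : transOp L (τ+(n:ℤ)+1) (n+1-1-n) (N (τ+(n:ℤ)) (sol F τ u n))
          = N (τ+(n:ℤ)) (sol F τ u n) := by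
        have h0 : n+1-1-n = 0 := by omega
        rw [h0]; rfl
      have hsum : ∑ j ∈ Finset.range n, transOp L (τ+(j:ℤ)+1) (n+1-1-j) (N (τ+(j:ℤ)) (sol F τ u j))
          = L (τ+(n:ℤ)) (∑ j ∈ Finset.range n,
              transOp L (τ+(j:ℤ)+1) (n-1-j) (N (τ+(j:ℤ)) (sol F τ u j))) := by
        rw [map_sum]
        refine Finset.sum_congr rfl fun j hj => ?_
        have hj' : j < n := Finset.mem_range.1 hj
        have h2 : n+1-1-j = (n-1-j)+1 := by omega
        rw [h2]
        show (L ((τ+(j:ℤ)+1) + ((n-1-j : ℕ):ℤ))).comp (transOp L (τ+(j:ℤ)+1) (n-1-j)) _ = _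
        have h3 : (τ+(j:ℤ)+1) + ((n-1-j : ℕ):ℤ) = τ + (n:ℤ) := by omega
        rw [h3]
        rfl
      rw [h1]
      nth_rewrite 1 [ih]
      rw [map_add, Finset.sum_range_succ, hlast, hsum, add_assoc]
      rfl
  -- norm estimate (variation of constants)
  have hvocn : ∀ n : ℕ, ‖sol F τ u n‖ ≤
      K * C * ∏ r ∈ Finset.range n, α (τ+(r:ℤ))
      + K * ∑ j ∈ Finset.range n,
          (b (τ+(j:ℤ)) + a (τ+(j:ℤ)) * ‖sol F τ u j‖) * ∏ r ∈ Finset.Ico (j+1) n, α (τ+(r:ℤ)) := by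
    intro n
    have hop0 : ‖transOp L τ n‖ ≤ K * ∏ r ∈ Finset.range n, α (τ+(r:ℤ)) := by
      have h := hΦ τ (τ+(n:ℤ)) hτ (hmem _ (by omega)) (by omega)
      have ht : ((τ+(n:ℤ)) - τ).toNat = n := by omega
      rw [ht] at h
      have h2 := prodIcoIntShift α τ 0 n
      simp only [Nat.cast_zero, add_zero] at h2
      rwa [h2, ← Finset.range_eq_Ico] at h
    have hterm : ∀ j ∈ Finset.range n,
        ‖transOp L (τ+(j:ℤ)+1) (n-1-j) (N (τ+(j:ℤ)) (sol F τ u j))‖ ≤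
        K * ((b (τ+(j:ℤ)) + a (τ+(j:ℤ)) * ‖sol F τ u j‖) * ∏ r ∈ Finset.Ico (j+1) n, α (τ+(r:ℤ))) := by
      intro j hj
      have hj' := Finset.mem_range.1 hj
      have hop : ‖transOp L (τ+(j:ℤ)+1) (n-1-j)‖ ≤ K * ∏ r ∈ Finset.Ico (j+1) n, α (τ+(r:ℤ)) := by
        have h := hΦ (τ+(j:ℤ)+1) (τ+(n:ℤ)) (hmem _ (by omega)) (hmem _ (by omega)) (by omega)
        have ht : ((τ+(n:ℤ)) - (τ+(j:ℤ)+1)).toNat = n-1-j := by omega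
        rw [ht] at h
        have h2 := prodIcoIntShift α τ (j+1) n
        have h3 : τ + ((j+1:ℕ):ℤ) = τ + (j:ℤ) + 1 := by push_cast; ring
        rw [h3] at h2
        rwa [h2] at h
      have hNb : ‖N (τ+(j:ℤ)) (sol F τ u j)‖ ≤ b (τ+(j:ℤ)) + a (τ+(j:ℤ)) * ‖sol F τ u j‖ :=
        hN _ (hmem _ (by omega)) _ (hsolU j)
      calc ‖transOp L (τ+(j:ℤ)+1) (n-1-j) (N (τ+(j:ℤ)) (sol F τ u j))‖
          ≤ ‖transOp L (τ+(j:ℤ)+1) (n-1-j)‖ * ‖N (τ+(j:ℤ)) (sol F τ u j)‖ :=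
            ContinuousLinearMap.le_opNorm _ _
        _ ≤ (K * ∏ r ∈ Finset.Ico (j+1) n, α (τ+(r:ℤ))) * (b (τ+(j:ℤ)) + a (τ+(j:ℤ)) * ‖sol F τ u j‖) := by
            refine mul_le_mul hop hNb (norm_nonneg _) ?_
            exact mul_nonneg hK0 (Finset.prod_nonneg fun r _ => hα _)
        _ = K * ((b (τ+(j:ℤ)) + a (τ+(j:ℤ)) * ‖sol F τ u j‖) * ∏ r ∈ Finset.Ico (j+1) n, α (τ+(r:ℤ))) := by
            ring
    calc ‖sol F τ u n‖
        = ‖transOp L τ n u + ∑ j ∈ Finset.range n,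
            transOp L (τ+(j:ℤ)+1) (n-1-j) (N (τ+(j:ℤ)) (sol F τ u j))‖ := by rw [← hvoc n]
      _ ≤ ‖transOp L τ n u‖ + ‖∑ j ∈ Finset.range n,
            transOp L (τ+(j:ℤ)+1) (n-1-j) (N (τ+(j:ℤ)) (sol F τ u j))‖ := norm_add_le _ _
      _ ≤ ‖transOp L τ n u‖ + ∑ j ∈ Finset.range n,
            ‖transOp L (τ+(j:ℤ)+1) (n-1-j) (N (τ+(j:ℤ)) (sol F τ u j))‖ :=
          add_le_add le_rfl (norm_sum_le _ _)
      _ ≤ (K * ∏ r ∈ Finset.range n, α (τ+(r:ℤ))) * C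
          + ∑ j ∈ Finset.range n, K * ((b (τ+(j:ℤ)) + a (τ+(j:ℤ)) * ‖sol F τ u j‖)
              * ∏ r ∈ Finset.Ico (j+1) n, α (τ+(r:ℤ))) := by
          refine add_le_add ?_ (Finset.sum_le_sum hterm)
          calc ‖transOp L τ n u‖ ≤ ‖transOp L τ n‖ * ‖u‖ := ContinuousLinearMap.le_opNorm _ _
            _ ≤ (K * ∏ r ∈ Finset.range n, α (τ+(r:ℤ))) * C :=
                mul_le_mul hop0 huC (norm_nonneg _)
                  (mul_nonneg hK0 (Finset.prod_nonneg fun r _ => hα _))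
      _ = K * C * ∏ r ∈ Finset.range n, α (τ+(r:ℤ))
          + K * ∑ j ∈ Finset.range n, (b (τ+(j:ℤ)) + a (τ+(j:ℤ)) * ‖sol F τ u j‖)
              * ∏ r ∈ Finset.Ico (j+1) n, α (τ+(r:ℤ)) := by
          rw [Finset.mul_sum]; ring
  -- Gronwall comparison
  have hmain := gronwall K C hK (fun j => a (τ+(j:ℤ))) (fun j => b (τ+(j:ℤ)))
      (fun j => α (τ+(j:ℤ))) (fun n => ‖sol F τ u n‖)
      (fun n => ha _) (fun n => hα _) hvocn s
  -- conclusion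
  have hphi : phi F (τ + (s:ℤ)) τ u = sol F τ u s := by
    unfold phi
    congr 1
    omega
  rw [hphi]
  refine ⟨hsolU s, ?_⟩
  have hgs := hS s hs
  have : ‖sol F τ u s‖ < R τ + ρ := lt_of_le_of_lt hmain hgs
  linarith
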